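/- Let G be a finite group and let A(G) be its Burnside ring. Let Z be a finite G-set and n ≥ 1, and let [n^Z] ∈ A(G) denote the class of the G-set of functions Z → {1,...,n} with action by precomposition. Then, with H_1,...,H_k a set of representatives of conjugacy classes of subgroups of G, the element ∏_{i=1}^{k} ([n^Z] − n^{|Z/H_i|}) is zero in A(G), where |Z/H_i| is the number of H_i-orbits of Z. -/

import Mathlib

/-- A bundled finite `G`-set. -/
structure FinGSet (G : Type) [Group G] : Type 1 where
  X : Type
  [fin : Fintype X]
  [act : MulAction G X]

attribute [instance] FinGSet.fin FinGSet.act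

namespace FinGSet

variable {G : Type} [Group G]

/-- Disjoint union of finite `G`-sets. -/
noncomputable def sum (A B : FinGSet G) : FinGSet G where
  X := A.X ⊕ B.X
  act :=
    { smul := fun g => Sum.map (fun a => g • a) (fun b => g • b)
      one_smul := by intro x; cases x <;> simp [Sum.map]
      mul_smul := by intro g h x; cases x <;> simp [Sum.map, mul_smul] }

/-- Cartesian product of finite `G`-sets (diagonal action). -/
noncomputable def prod (A B : FinGSet G) : FinGSet G where
  X := A.X × B.X

/-- The one-point `G`-set. -/
noncomputable def pt : FinGSet G where
  X := PUnit
  act := { smul := fun _ x => x, one_smul := fun _ => rfl, mul_smul := fun _ _ _ => rfl }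

/-- The `G`-set of functions `Z → Fin n` with `G` acting by precomposition with the inverse. -/
noncomputable def funPow (Z : Type) [Fintype Z] [DecidableEq Z] [MulAction G Z] (n : ℕ) :
    FinGSet G where
  X := Z → Fin n
  act :=
    { smul := fun g f z => f (g⁻¹ • z)
      one_smul := by intro f; funext z; show f ((1 : G)⁻¹ • z) = f z; simp
      mul_smul := by
        intro g h f; funext z
        show f ((g * h)⁻¹ • z) = f (h⁻¹ • g⁻¹ • z)
        rw [mul_inv_rev, mul_smul] }

/-- Isomorphism (equivariant bijection) of finite `G`-sets. -/
def Iso (A B : FinGSet G) : Prop :=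
  ∃ e : A.X ≃ B.X, ∀ (g : G) (x : A.X), e (g • x) = g • e x

end FinGSet

namespace FinGSet

variable {G : Type} [Group G]

-- ======== auxiliary development ========

@[simp] lemma sum_smul_inl {A B : FinGSet G} (g : G) (a : A.X) :
    (g • (Sum.inl a : (A.sum B).X)) = Sum.inl (g • a) := rfl

@[simp] lemma sum_smul_inr {A B : FinGSet G} (g : G) (b : B.X) :
    (g • (Sum.inr b : (A.sum B).X)) = Sum.inr (g • b) := rfl

@[simp] lemma prod_smul {A B : FinGSet G} (g : G) (p : (A.prod B).X) :
    g • p = (g • p.1, g • p.2) := rfl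

@[simp] lemma pt_smul (g : G) (x : (pt (G := G)).X) : g • x = x := rfl

/-- Trivial `G`-set on `Fin m`. -/
noncomputable def triv (m : ℕ) : FinGSet G where
  X := Fin m
  act := { smul := fun _ x => x, one_smul := fun _ => rfl, mul_smul := fun _ _ _ => rfl }

@[simp] lemma triv_smul {m : ℕ} (g : G) (x : (triv (G := G) m).X) : g • x = x := rfl

lemma iso_refl (A : FinGSet G) : Iso A A := ⟨Equiv.refl _, fun _ _ => rfl⟩

lemma iso_symm {A B : FinGSet G} (h : Iso A B) : Iso B A := by
  obtain ⟨e, he⟩ := h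
  exact ⟨e.symm, fun g x => by
    apply e.injective; rw [he, e.apply_symm_apply, e.apply_symm_apply]⟩

lemma iso_trans {A B C : FinGSet G} (h1 : Iso A B) (h2 : Iso B C) : Iso A C := by
  obtain ⟨e, he⟩ := h1; obtain ⟨f, hf⟩ := h2
  exact ⟨e.trans f, fun g x => by simp [he, hf]⟩

lemma iso_sum_congr {A A' B B' : FinGSet G} (h1 : Iso A A') (h2 : Iso B B') :
    Iso (A.sum B) (A'.sum B') := by
  obtain ⟨e, he⟩ := h1; obtain ⟨f, hf⟩ := h2
  refine ⟨Equiv.sumCongr e f, fun g x => ?_⟩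
  cases x with
  | inl a => exact congrArg Sum.inl (he g a)
  | inr b => exact congrArg Sum.inr (hf g b)

section chi
variable {A : Type} [CommRing A] (χ : FinGSet G → A)
  (hiso : ∀ X Y : FinGSet G, FinGSet.Iso X Y → χ X = χ Y)
  (hadd : ∀ X Y : FinGSet G, χ (X.sum Y) = χ X + χ Y)
  (hmul : ∀ X Y : FinGSet G, χ (X.prod Y) = χ X * χ Y)
  (hone : χ FinGSet.pt = 1)

include hiso hadd in
lemma chi_zero : χ (triv 0) = 0 := by
  have hi : Iso ((triv 0 : FinGSet G).sum (triv 0)) (triv 0) :=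
    ⟨Equiv.equivOfIsEmpty (Fin 0 ⊕ Fin 0) (Fin 0), fun g x => by
      rcases x with a | a <;> exact a.elim0⟩
  have h := hadd (triv 0) (triv 0)
  rw [hiso _ _ hi] at h
  linear_combination -h

include hiso hadd hone in
lemma chi_triv : ∀ m : ℕ, χ (triv m) = m := by
  intro m
  induction m with
  | zero => simpa using chi_zero χ hiso hadd
  | succ k ih =>
    have hi : Iso ((pt : FinGSet G).sum (triv k)) (triv (G := G) (k+1)) := by
      refine ⟨((finSuccEquiv k).trans ((Equiv.optionEquivSumPUnit _).trans (Equiv.sumComm _ _))).symm,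
        fun g x => ?_⟩
      rcases x with a | a <;> rfl
    rw [← hiso _ _ hi, hadd, hone, ih]
    push_cast; ring

/-- Iterated product power. -/
noncomputable def npow (F : FinGSet G) : ℕ → FinGSet G
  | 0 => pt
  | k+1 => F.prod (npow F k)

include hmul hone in
lemma chi_npow (F : FinGSet G) : ∀ k, χ (npow F k) = χ F ^ k := by
  intro k
  induction k with
  | zero => simpa [npow] using hone
  | succ k ih => rw [npow, hmul, ih, pow_succ]; ring

/-- Disjoint union over a list of indices. -/
noncomputable def sumList {ι : Type*} (f : ι → FinGSet G) : List ι → FinGSet G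
  | [] => triv 0
  | a :: l => (f a).sum (sumList f l)

include hiso hadd in
lemma chi_sumList {ι : Type*} (f : ι → FinGSet G) : ∀ l : List ι,
    χ (sumList f l) = (l.map fun i => χ (f i)).sum := by
  intro l
  induction l with
  | nil => simpa [sumList] using chi_zero χ hiso hadd
  | cons a l ih => rw [sumList, hadd, ih]; simp

end chi

open Classical in
/-- positive part of the expansion of `∏ (χ F - c H)`. -/
noncomputable def posPart (F : FinGSet G) (s : Finset (Subgroup G)) (c : Subgroup G → ℕ) :
    FinGSet G :=
  sumList (fun T => (npow F T.card).prod (triv (∏ H ∈ s \ T, c H)))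
    ((s.powerset.filter fun T => Even (s \ T).card).toList)

open Classical in
noncomputable def negPart (F : FinGSet G) (s : Finset (Subgroup G)) (c : Subgroup G → ℕ) :
    FinGSet G :=
  sumList (fun T => (npow F T.card).prod (triv (∏ H ∈ s \ T, c H)))
    ((s.powerset.filter fun T => ¬ Even (s \ T).card).toList)

section chi2
variable {A : Type} [CommRing A] (χ : FinGSet G → A)
  (hiso : ∀ X Y : FinGSet G, FinGSet.Iso X Y → χ X = χ Y)
  (hadd : ∀ X Y : FinGSet G, χ (X.sum Y) = χ X + χ Y)
  (hmul : ∀ X Y : FinGSet G, χ (X.prod Y) = χ X * χ Y)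
  (hone : χ FinGSet.pt = 1)

include hiso hadd hmul hone in
lemma expand (F : FinGSet G) (s : Finset (Subgroup G)) (c : Subgroup G → ℕ) :
    ∏ H ∈ s, (χ F - (c H : A)) = χ (posPart F s c) - χ (negPart F s c) := by
  classical
  have hterm : ∀ T : Finset (Subgroup G),
      χ ((npow F T.card).prod (triv (∏ H ∈ s \ T, c H)))
        = χ F ^ T.card * ((∏ H ∈ s \ T, c H : ℕ) : A) := by
    intro T
    rw [hmul, chi_npow χ hmul hone, chi_triv χ hiso hadd hone]
  have hpos : χ (posPart F s c) =
      ∑ T ∈ s.powerset.filter (fun T => Even (s \ T).card),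
        χ F ^ T.card * ((∏ H ∈ s \ T, c H : ℕ) : A) := by
    rw [posPart, chi_sumList χ hiso hadd, Finset.sum_map_toList]
    · exact Finset.sum_congr rfl fun T _ => hterm T
  have hneg : χ (negPart F s c) =
      ∑ T ∈ s.powerset.filter (fun T => ¬ Even (s \ T).card),
        χ F ^ T.card * ((∏ H ∈ s \ T, c H : ℕ) : A) := by
    rw [negPart, chi_sumList χ hiso hadd, Finset.sum_map_toList]
    · exact Finset.sum_congr rfl fun T _ => hterm T
  have key : ∏ H ∈ s, (χ F - (c H : A)) =
      ∑ T ∈ s.powerset, (-1 : A) ^ (s \ T).card * (χ F ^ T.card * ((∏ H ∈ s \ T, c H : ℕ) : A)) := by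
    have : ∀ H ∈ s, χ F - (c H : A) = χ F + (-(c H : A)) := fun H _ => by ring
    rw [Finset.prod_congr rfl this, Finset.prod_add]
    refine Finset.sum_congr rfl fun T hT => ?_
    rw [Finset.prod_const]
    have : ∏ H ∈ s \ T, (-(c H : A)) = (-1 : A) ^ (s \ T).card * ((∏ H ∈ s \ T, c H : ℕ) : A) := by
      push_cast
      rw [← Finset.prod_const, ← Finset.prod_mul_distrib]
      exact Finset.prod_congr rfl fun H _ => by ring
    rw [this]; ring
  rw [key, ← Finset.sum_filter_add_sum_filter_not s.powerset (fun T => Even (s \ T).card), hpos, hneg]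
  have h1 : ∀ T ∈ s.powerset.filter (fun T => Even (s \ T).card),
      (-1 : A) ^ (s \ T).card * (χ F ^ T.card * ((∏ H ∈ s \ T, c H : ℕ) : A))
      = χ F ^ T.card * ((∏ H ∈ s \ T, c H : ℕ) : A) := by
    intro T hT
    rw [Finset.mem_filter] at hT
    rw [hT.2.neg_one_pow, one_mul]
  have h2 : ∀ T ∈ s.powerset.filter (fun T => ¬ Even (s \ T).card),
      (-1 : A) ^ (s \ T).card * (χ F ^ T.card * ((∏ H ∈ s \ T, c H : ℕ) : A))
      = -(χ F ^ T.card * ((∏ H ∈ s \ T, c H : ℕ) : A)) := by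
    intro T hT
    rw [Finset.mem_filter] at hT
    rw [(Nat.not_even_iff_odd.mp hT.2).neg_one_pow]; ring
  rw [Finset.sum_congr rfl h1, Finset.sum_congr rfl h2, Finset.sum_neg_distrib]
  ring

end chi2
end FinGSet

namespace FinGSet
variable {G : Type} [Group G]

open MulAction

/-- Number of `K`-fixed points. -/
noncomputable def fixb (K : Subgroup G) (X : FinGSet G) : ℕ :=
  Nat.card (fixedPoints K X.X)

lemma mem_fixb_iff {K : Subgroup G} {X : FinGSet G} (x : X.X) :
    x ∈ fixedPoints K X.X ↔ ∀ k : G, k ∈ K → k • x = x := by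
  constructor
  · intro h k hk; exact h ⟨k, hk⟩
  · intro h k; exact h k.1 k.2

lemma fixb_iso {K : Subgroup G} {X Y : FinGSet G} (h : Iso X Y) : fixb K X = fixb K Y := by
  obtain ⟨e, he⟩ := h
  refine Nat.card_congr (Equiv.subtypeEquiv e fun x => ?_)
  constructor
  · intro hx k
    have : e ((k : G) • x) = (k : G) • e x := he k x
    rw [show ((k : G) • x) = x from hx k] at this
    exact this.symm
  · intro hx k
    have : e ((k : G) • x) = (k : G) • e x := he k x
    rw [show ((k : G) • e x) = e x from hx k] at this
    exact e.injective this

lemma fixb_sum (K : Subgroup G) (X Y : FinGSet G) :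
    fixb K (X.sum Y) = fixb K X + fixb K Y := by
  have e : (fixedPoints K (X.sum Y).X) ≃
      (fixedPoints K X.X ⊕ fixedPoints K Y.X) := by
    refine (Equiv.subtypeSum (p := fun c => c ∈ fixedPoints K (X.sum Y).X)).trans
      (Equiv.sumCongr (Equiv.subtypeEquivRight fun a => ?_) (Equiv.subtypeEquivRight fun b => ?_))
    · exact ⟨fun h k => Sum.inl_injective (h k), fun h k => congrArg Sum.inl (h k)⟩
    · exact ⟨fun h k => Sum.inr_injective (h k), fun h k => congrArg Sum.inr (h k)⟩
  rw [fixb, Nat.card_congr e, Nat.card_sum]; rfl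

lemma fixb_prod (K : Subgroup G) (X Y : FinGSet G) :
    fixb K (X.prod Y) = fixb K X * fixb K Y := by
  have e : (fixedPoints K (X.prod Y).X) ≃
      (fixedPoints K X.X × fixedPoints K Y.X) :=
    { toFun := fun c => (⟨c.1.1, fun k => congrArg Prod.fst (c.2 k)⟩,
        ⟨c.1.2, fun k => congrArg Prod.snd (c.2 k)⟩)
      invFun := fun p => ⟨(p.1.1, p.2.1), fun k => Prod.ext (p.1.2 k) (p.2.2 k)⟩
      left_inv := fun c => rfl
      right_inv := fun p => rfl }
  rw [fixb, Nat.card_congr e, Nat.card_prod]; rfl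

lemma fixb_pt (K : Subgroup G) : fixb K (pt : FinGSet G) = 1 := by
  have e : (fixedPoints K (pt : FinGSet G).X) ≃ PUnit :=
    Equiv.subtypeUnivEquiv (fun x k => rfl)
  rw [fixb, Nat.card_congr e]; simp

lemma fixb_funPow (K : Subgroup G) (Z : Type) [Fintype Z] [DecidableEq Z] [MulAction G Z]
    (n : ℕ) :
    fixb K (funPow Z n) = n ^ Nat.card (orbitRel.Quotient K Z) := by
  have key : ∀ f : (funPow (G := G) Z n).X, f ∈ fixedPoints K (funPow Z n).X ↔
      ∀ (k : G), k ∈ K → ∀ z : Z, f (k • z) = f z := by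
    intro f
    rw [mem_fixb_iff]
    constructor
    · intro h k hk z
      have h2 : f (k⁻¹⁻¹ • z) = f z := congrFun (h k⁻¹ (K.inv_mem hk)) z
      rw [inv_inv] at h2; exact h2
    · intro h k hk
      funext z
      exact h k⁻¹ (K.inv_mem hk) z
  have e : (fixedPoints K (funPow (G := G) Z n).X) ≃ (orbitRel.Quotient K Z → Fin n) := by
    refine
    { toFun := fun f => Quotient.lift f.1 ?_
      invFun := fun φ => ⟨fun z => φ (Quotient.mk _ z), ?_⟩
      left_inv := ?_
      right_inv := ?_ }
    · intro z z' hzz'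
      have hz : z ∈ orbit K z' := hzz'
      obtain ⟨k, hk⟩ := hz
      have h2 : f.1 ((k : G) • z') = f.1 z' := (key f.1).1 f.2 k.1 k.2 z'
      have h3 : (k : G) • z' = z := hk
      rw [h3] at h2; exact h2
    · refine (key _).2 ?_
      intro k hk z
      refine congrArg φ (Quotient.sound ?_)
      show k • z ∈ orbit K z
      exact mem_orbit_iff.2 ⟨⟨k, hk⟩, rfl⟩
    · intro f; rfl
    · intro φ; funext q; induction q using Quotient.ind; rfl
  rw [fixb, Nat.card_congr e, Nat.card_fun]
  simp

lemma orbitQuot_conj (Z : Type) [MulAction G Z] (g : G) (H : Subgroup G) :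
    Nat.card (orbitRel.Quotient (Subgroup.map (MulAut.conj g).toMonoidHom H) Z)
      = Nat.card (orbitRel.Quotient H Z) := by
  set K := Subgroup.map (MulAut.conj g).toMonoidHom H with hK
  have claim : ∀ z z' : Z, orbitRel H Z z z' ↔ orbitRel K Z (g • z) (g • z') := by
    intro z z'
    rw [MulAction.orbitRel_apply, MulAction.orbitRel_apply]
    constructor
    · rintro ⟨h, hh⟩
      have hh' : (h : G) • z' = z := hh
      refine ⟨⟨g * h * g⁻¹, Subgroup.mem_map.2 ⟨h, h.2, rfl⟩⟩, ?_⟩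
      show (g * (h : G) * g⁻¹) • (g • z') = g • z
      rw [← hh']
      simp [mul_smul]
    · rintro ⟨k, hk⟩
      have hk' : (k : G) • (g • z') = g • z := hk
      obtain ⟨h, hh, hgh⟩ := k.2
      refine ⟨⟨h, hh⟩, ?_⟩
      show h • z' = z
      have : (MulAut.conj g) h = (k : G) := hgh
      rw [MulAut.conj_apply] at this
      rw [← this] at hk'
      have := congrArg (fun w => g⁻¹ • w) hk'
      simpa [mul_smul] using this
  exact (Nat.card_congr (Quotient.congr (MulAction.toPerm g) claim)).symm


/-- Invariant subset as a `G`-set. -/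
noncomputable def subGSet (X : FinGSet G) (s : Set X.X) (hs : ∀ (g : G) x, x ∈ s → g • x ∈ s) :
    FinGSet G where
  X := ↥s
  fin := s.toFinite.fintype
  act :=
    { smul := fun g x => ⟨g • x.1, hs g x.1 x.2⟩
      one_smul := fun x => Subtype.ext (one_smul G x.1)
      mul_smul := fun g h x => Subtype.ext (mul_smul g h x.1) }

@[simp] lemma subGSet_smul_coe {X : FinGSet G} {s : Set X.X} {hs} (g : G)
    (x : (subGSet X s hs).X) : (g • x : (subGSet X s hs).X).1 = g • x.1 := rfl

lemma compl_invariant {X : FinGSet G} {s : Set X.X} (hs : ∀ (g : G) x, x ∈ s → g • x ∈ s) :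
    ∀ (g : G) x, x ∈ sᶜ → g • x ∈ sᶜ := by
  intro g x hx hmem
  exact hx (by simpa using hs g⁻¹ (g • x) hmem)

lemma iso_sub_compl (X : FinGSet G) (s : Set X.X) (hs : ∀ (g : G) x, x ∈ s → g • x ∈ s) :
    Iso X ((subGSet X s hs).sum (subGSet X sᶜ (compl_invariant hs))) := by
  classical
  refine ⟨⟨fun x => if hx : x ∈ s then Sum.inl ⟨x, hx⟩ else Sum.inr ⟨x, hx⟩,
      Sum.elim Subtype.val Subtype.val, ?_, ?_⟩, ?_⟩
  · intro x; by_cases hx : x ∈ s <;> simp [hx] <;> rfl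
  · intro y
    rcases y with ⟨a, ha⟩ | ⟨a, ha⟩
    · exact dif_pos ha
    · have ha' : a ∉ s := ha
      exact dif_neg ha'
  · intro g x
    by_cases hx : x ∈ s
    · show (if hx' : g • x ∈ s then _ else _) = _
      refine (dif_pos (hs g x hx)).trans ?_
      show _ = Sum.map _ _ (if hx' : x ∈ s then _ else _)
      refine Eq.trans ?_ (congrArg (Sum.map _ _) (dif_pos hx).symm)
      rfl
    · show (if hx' : g • x ∈ s then _ else _) = _
      refine (dif_neg (fun h => hx (by simpa using hs g⁻¹ (g • x) h))).trans ?_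
      show _ = Sum.map _ _ (if hx' : x ∈ s then _ else _)
      refine Eq.trans ?_ (congrArg (Sum.map _ _) (dif_neg hx).symm)
      rfl

open MulAction in
lemma orbit_invariant (X : FinGSet G) (x : X.X) :
    ∀ (g : G) z, z ∈ orbit G x → g • z ∈ orbit G x :=
  fun g z hz => MulAction.smul_orbit_subset g x (Set.smul_mem_smul_set hz)

open MulAction in
lemma orbitEquiv_symm_equivariant (X : FinGSet G) (x : X.X) (g : G) (q : G ⧸ stabilizer G x) :
    ((orbitEquivQuotientStabilizer G x).symm (g • q) : X.X)
      = g • ((orbitEquivQuotientStabilizer G x).symm q : X.X) := by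
  induction q using Quotient.ind with
  | _ a =>
    have h1 : g • (QuotientGroup.mk a : G ⧸ stabilizer G x) = QuotientGroup.mk (g * a) :=
      MulAction.Quotient.smul_mk _ g a
    rw [h1, orbitEquivQuotientStabilizer_symm_apply, orbitEquivQuotientStabilizer_symm_apply,
      mul_smul]

open MulAction in
/-- Orbits with equal stabilizers are isomorphic `G`-sets. -/
lemma iso_orbit_of_stab_eq (X Y : FinGSet G) (x : X.X) (y : Y.X)
    (hst : stabilizer G x = stabilizer G y) :
    Iso (subGSet X (orbit G x) (orbit_invariant X x))
      (subGSet Y (orbit G y) (orbit_invariant Y y)) := by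
  set e1 := orbitEquivQuotientStabilizer G x with he1def
  set e2 := orbitEquivQuotientStabilizer G y with he2def
  set eqv := Subgroup.quotientEquivOfEq hst with heqdef
  have heq : ∀ (g : G) (q : G ⧸ stabilizer G x), eqv (g • q) = g • eqv q := by
    intro g q
    induction q using Quotient.ind with
    | _ a =>
      rw [MulAction.Quotient.smul_mk _ g a]
      show eqv (QuotientGroup.mk (g * a)) = g • eqv (QuotientGroup.mk a)
      rw [Subgroup.quotientEquivOfEq_mk, Subgroup.quotientEquivOfEq_mk,
        MulAction.Quotient.smul_mk _ g a, smul_eq_mul]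
  have he2 : ∀ (g : G) (q : G ⧸ stabilizer G y),
      (e2.symm (g • q) : (subGSet Y (orbit G y) (orbit_invariant Y y)).X)
        = g • (e2.symm q : (subGSet Y (orbit G y) (orbit_invariant Y y)).X) := by
    intro g q
    apply Subtype.ext
    exact orbitEquiv_symm_equivariant Y y g q
  have he1 : ∀ (g : G) (z : (subGSet X (orbit G x) (orbit_invariant X x)).X),
      e1 ((g • z : (subGSet X (orbit G x) (orbit_invariant X x)).X)) = g • e1 z := by
    intro g z
    apply e1.symm.injective
    refine (e1.symm_apply_apply _).trans ?_
    apply Subtype.ext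
    have h := orbitEquiv_symm_equivariant X x g (e1 z)
    refine Eq.trans ?_ h.symm
    exact congrArg (fun w : ↥(orbit G x) => g • (w : X.X)) (e1.symm_apply_apply z).symm
  refine ⟨e1.trans (eqv.trans e2.symm), fun g z => ?_⟩
  show e2.symm (eqv (e1 (g • z))) = g • e2.symm (eqv (e1 z))
  rw [he1, heq, he2]

lemma fixb_bot (X : FinGSet G) : fixb ⊥ X = Nat.card X.X := by
  refine Nat.card_congr (Equiv.subtypeUnivEquiv fun x => ?_)
  intro k
  have : (k : G) = 1 := Subgroup.mem_bot.1 k.2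
  show (k : G) • x = x
  rw [this, one_smul]

open MulAction in
lemma stab_fix_ne (X : FinGSet G) (x : X.X) : fixb (stabilizer G x) X ≠ 0 := by
  rw [fixb, Nat.card_ne_zero]
  exact ⟨⟨⟨x, fun k => k.2⟩⟩, Set.toFinite _⟩

open MulAction in
lemma iso_of_fixb_aux [Fintype G] :
    ∀ (N : ℕ) (X Y : FinGSet G), Fintype.card X.X ≤ N →
      (∀ K : Subgroup G, fixb K X = fixb K Y) → Iso X Y := by
  have finsub : Finite (Subgroup G) :=
    Finite.of_injective (fun H : Subgroup G => (H : Set G)) SetLike.coe_injective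
  have fintsub : Fintype (Subgroup G) := Fintype.ofFinite _
  intro N
  induction N with
  | zero =>
    intro X Y hcard hfix
    have hX : IsEmpty X.X := Fintype.card_eq_zero_iff.1 (le_antisymm hcard (Nat.zero_le _))
    have hY : IsEmpty Y.X := by
      have h1 := hfix ⊥
      rw [fixb_bot, fixb_bot] at h1
      have : Nat.card Y.X = 0 := by
        rw [← h1, Nat.card_eq_fintype_card, Fintype.card_eq_zero_iff.2 hX]
      rw [Nat.card_eq_fintype_card] at this
      exact Fintype.card_eq_zero_iff.1 this
    exact ⟨Equiv.equivOfIsEmpty _ _, fun g z => (hX.false z).elim⟩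
  | succ N ih =>
    intro X Y hcard hfix
    classical
    by_cases hXe : IsEmpty X.X
    · -- reuse the zero argument
      have hY : IsEmpty Y.X := by
        have h1 := hfix ⊥
        rw [fixb_bot, fixb_bot] at h1
        have : Nat.card Y.X = 0 := by
          rw [← h1, Nat.card_eq_fintype_card, Fintype.card_eq_zero_iff.2 hXe]
        rw [Nat.card_eq_fintype_card] at this
        exact Fintype.card_eq_zero_iff.1 this
      exact ⟨Equiv.equivOfIsEmpty _ _, fun g z => (hXe.false z).elim⟩
    · rw [not_isEmpty_iff] at hXe
      obtain ⟨x0⟩ := hXe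
      -- the finset of subgroups with nonzero fixed count
      set t : Finset (Subgroup G) := Finset.univ.filter (fun K => fixb K X ≠ 0) with ht
      have htne : t.Nonempty := by
        refine ⟨stabilizer G x0, ?_⟩
        rw [ht, Finset.mem_filter]
        exact ⟨Finset.mem_univ _, stab_fix_ne X x0⟩
      obtain ⟨H, hHt, hHmax⟩ := Finset.exists_max_image t (fun K => Nat.card K) htne
      have hHfix : fixb H X ≠ 0 := (Finset.mem_filter.1 hHt).2
      -- a point of X with stabilizer exactly H
      obtain ⟨⟨x, hxmem⟩, -⟩ := Nat.card_ne_zero.1 hHfix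
      have hHx : H ≤ stabilizer G x := fun h hh => hxmem ⟨h, hh⟩
      have hstabx : stabilizer G x = H := by
        refine (Subgroup.eq_of_le_of_card_ge hHx ?_).symm
        apply hHmax
        rw [ht, Finset.mem_filter]
        exact ⟨Finset.mem_univ _, stab_fix_ne X x⟩
      -- a point of Y with stabilizer exactly H
      have hHfixY : fixb H Y ≠ 0 := by rw [← hfix]; exact hHfix
      obtain ⟨⟨y, hymem⟩, -⟩ := Nat.card_ne_zero.1 hHfixY
      have hHy : H ≤ stabilizer G y := fun h hh => hymem ⟨h, hh⟩
      have hstaby : stabilizer G y = H := by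
        refine (Subgroup.eq_of_le_of_card_ge hHy ?_).symm
        apply hHmax
        rw [ht, Finset.mem_filter]
        refine ⟨Finset.mem_univ _, ?_⟩
        rw [hfix]
        exact stab_fix_ne Y y
      -- decompose
      have hdecX := iso_sub_compl X (orbit G x) (orbit_invariant X x)
      have hdecY := iso_sub_compl Y (orbit G y) (orbit_invariant Y y)
      have horb := iso_orbit_of_stab_eq X Y x y (hstabx.trans hstaby.symm)
      set XC := subGSet X (orbit G x)ᶜ (compl_invariant (orbit_invariant X x)) with hXC
      set YC := subGSet Y (orbit G y)ᶜ (compl_invariant (orbit_invariant Y y)) with hYC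
      have hfixC : ∀ K : Subgroup G, fixb K XC = fixb K YC := by
        intro K
        have h1 : fixb K X = fixb K (subGSet X (orbit G x) (orbit_invariant X x)) + fixb K XC := by
          rw [fixb_iso hdecX, fixb_sum]
        have h2 : fixb K Y = fixb K (subGSet Y (orbit G y) (orbit_invariant Y y)) + fixb K YC := by
          rw [fixb_iso hdecY, fixb_sum]
        have h3 := hfix K
        rw [h1, h2, fixb_iso horb] at h3
        exact Nat.add_left_cancel h3
      have hcards : Fintype.card XC.X ≤ N := by
        have h := Fintype.card_subtype_lt (p := fun z => z ∈ (orbit G x)ᶜ) (x := x)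
          (by simp [MulAction.mem_orbit_self])
        have h2 : Fintype.card XC.X = Fintype.card {z // (fun w => w ∈ (orbit G x)ᶜ) z} :=
          Fintype.card_congr (Equiv.refl _)
        have h3 : Fintype.card XC.X < Fintype.card X.X := by
          convert h using 1
        omega
      have hIHC := ih XC YC hcards hfixC
      exact iso_trans hdecX (iso_trans (iso_sum_congr horb hIHC) (iso_symm hdecY))

end FinGSet


/-- (Burnside-ring identity, phrased via the universal property of the
Burnside ring `A(G)`: an element of `A(G)` is `0` iff every additive, multiplicative,
isomorphism-invariant, unital invariant of finite `G`-sets with values in a commutative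
ring kills it.)  For a finite group `G`, a finite `G`-set `Z`, `n ≥ 1`, and a system
`s` of representatives of the conjugacy classes of subgroups of `G`,
`∏_{H ∈ s} ([n^Z] − n^{|Z/H|}) = 0` in `A(G)`. -/
theorem burnside_product_vanishes
    (G : Type) [Group G] [Fintype G] (Z : Type) [Fintype Z] [DecidableEq Z] [MulAction G Z]
    (n : ℕ) (hn : 1 ≤ n)
    (A : Type) [CommRing A] (χ : FinGSet G → A)
    (hiso : ∀ X Y : FinGSet G, FinGSet.Iso X Y → χ X = χ Y)
    (hadd : ∀ X Y : FinGSet G, χ (X.sum Y) = χ X + χ Y)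
    (hmul : ∀ X Y : FinGSet G, χ (X.prod Y) = χ X * χ Y)
    (hone : χ FinGSet.pt = 1)
    (s : Finset (Subgroup G))
    (hs : ∀ K : Subgroup G, ∃! H, H ∈ s ∧
        ∃ g : G, Subgroup.map (MulAut.conj g).toMonoidHom H = K) :
    ∏ H ∈ s, (χ (FinGSet.funPow Z n) - (n : A) ^ Nat.card (MulAction.orbitRel.Quotient H Z))
      = 0 := by
  classical
  set F := FinGSet.funPow (G := G) Z n with hF
  set c : Subgroup G → ℕ := fun H => n ^ Nat.card (MulAction.orbitRel.Quotient H Z) with hc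
  have hcast : ∀ H : Subgroup G,
      (n : A) ^ Nat.card (MulAction.orbitRel.Quotient H Z) = ((c H : ℕ) : A) := by
    intro H; rw [hc]; push_cast; ring
  calc ∏ H ∈ s, (χ F - (n : A) ^ Nat.card (MulAction.orbitRel.Quotient H Z))
      = ∏ H ∈ s, (χ F - ((c H : ℕ) : A)) := by
        refine Finset.prod_congr rfl fun H _ => ?_; rw [hcast H]
    _ = 0 := ?_
  rw [FinGSet.expand χ hiso hadd hmul hone F s c]
  suffices h : FinGSet.Iso (FinGSet.posPart F s c) (FinGSet.negPart F s c) by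
    rw [hiso _ _ h]; ring
  apply FinGSet.iso_of_fixb_aux (Fintype.card (FinGSet.posPart F s c).X) _ _ le_rfl
  intro K
  have hZint := FinGSet.expand (A := ℤ) (fun X => (FinGSet.fixb K X : ℤ))
    (fun X Y h => Nat.cast_inj.2 (FinGSet.fixb_iso h))
    (fun X Y => by
      show (FinGSet.fixb K (X.sum Y) : ℤ) = (FinGSet.fixb K X : ℤ) + (FinGSet.fixb K Y : ℤ)
      rw [FinGSet.fixb_sum]; push_cast; ring)
    (fun X Y => by
      show (FinGSet.fixb K (X.prod Y) : ℤ) = (FinGSet.fixb K X : ℤ) * (FinGSet.fixb K Y : ℤ)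
      rw [FinGSet.fixb_prod]; push_cast; ring)
    (by show (FinGSet.fixb K FinGSet.pt : ℤ) = 1
        rw [FinGSet.fixb_pt]; norm_num)
    F s c
  obtain ⟨H0, ⟨hH0s, g, hconj⟩, -⟩ := hs K
  have hfactor : ((FinGSet.fixb K F : ℤ) - ((c H0 : ℕ) : ℤ)) = 0 := by
    rw [hF, FinGSet.fixb_funPow K Z n]
    have hq : Nat.card (MulAction.orbitRel.Quotient K Z)
        = Nat.card (MulAction.orbitRel.Quotient H0 Z) := by
      rw [← hconj]; exact FinGSet.orbitQuot_conj Z g H0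
    rw [hc]; push_cast; rw [hq]; ring
  have hprod0 : (∏ H ∈ s, ((FinGSet.fixb K F : ℤ) - ((c H : ℕ) : ℤ))) = 0 :=
    Finset.prod_eq_zero hH0s hfactor
  rw [hZint] at hprod0
  exact_mod_cast sub_eq_zero.1 hprod0
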